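/- Let W_1, ..., W_{N-1} be a lazy one-dimensional random walk whose i.i.d. increments take value +a with probability 1/(2n), -a with probability 1/(2n), and 0 with probability (n-1)/n, where a > 0. Then P(|W_{N-1}| < a) <= 10 n / sqrt(N) for all N > 2. -/

import Mathlib

open MeasureTheory ProbabilityTheory
open Finset


lemma cb_sq (j : ℕ) : Nat.centralBinom j ^ 2 * (j + 1) ≤ 16 ^ j := by
  induction j with
  | zero => simp [Nat.centralBinom]
  | succ j ih =>
    have h := Nat.succ_mul_centralBinom_succ j
    have key : (j+1)^2 * (Nat.centralBinom (j+1) ^ 2 * (j+1+1)) ≤ (j+1)^2 * 16 ^ (j+1) := by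
      calc (j+1)^2 * (Nat.centralBinom (j+1) ^ 2 * (j+1+1))
          = ((j+1) * Nat.centralBinom (j+1))^2 * (j+2) := by ring
        _ = (2*(2*j+1))^2 * (j+2) * Nat.centralBinom j ^ 2 := by rw [h]; ring
        _ ≤ 16*(j+1)^2 * (Nat.centralBinom j ^ 2 * (j+1)) := by nlinarith [sq_nonneg (Nat.centralBinom j)]
        _ ≤ 16*(j+1)^2 * 16 ^ j := by exact Nat.mul_le_mul_left _ ih
        _ = (j+1)^2 * 16 ^ (j+1) := by ring
    exact Nat.le_of_mul_le_mul_left key (by positivity)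

lemma cb_real (j : ℕ) : (Nat.centralBinom j : ℝ) * Real.sqrt (j + 1) ≤ 4 ^ j := by
  have h : ((Nat.centralBinom j : ℝ)) ^ 2 * ((j : ℝ) + 1) ≤ 16 ^ j := by
    exact_mod_cast cb_sq j
  have h1 : (Nat.centralBinom j : ℝ) * Real.sqrt (j + 1)
      = Real.sqrt ((Nat.centralBinom j : ℝ) ^ 2 * ((j : ℝ) + 1)) := by
    rw [Real.sqrt_mul (by positivity), Real.sqrt_sq (by positivity)]
  rw [h1]
  calc Real.sqrt ((Nat.centralBinom j : ℝ) ^ 2 * ((j : ℝ) + 1)) ≤ Real.sqrt (16 ^ j) :=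
        Real.sqrt_le_sqrt h
    _ = 4 ^ j := by
        rw [show (16 : ℝ) ^ j = ((4:ℝ) ^ j) ^ 2 by rw [← pow_mul, pow_mul']; norm_num, Real.sqrt_sq (by positivity)]



lemma add_pow_smul {A : Type*} [CommSemiring A] (x y : A) (n : ℕ) :
    (x + y) ^ n = ∑ m ∈ Finset.range (n + 1), n.choose m • (x ^ m * y ^ (n - m)) := by
  rw [add_pow]
  exact Finset.sum_congr rfl fun m _ => by rw [nsmul_eq_mul]; ring

lemma key_identity (k : ℕ) (p q : ℝ) :
    ∑ s ∈ Finset.univ.filter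
        (fun s : Fin k → Fin 3 => (∑ i, (![1, -1, 0] : Fin 3 → ℤ) (s i)) = 0),
      ∏ i, (![p, p, q] : Fin 3 → ℝ) (s i)
    = ∑ m ∈ Finset.range (k + 1),
        (k.choose m : ℝ) * p ^ m * q ^ (k - m) *
          (if 2 ∣ m then (m.choose (m / 2) : ℝ) else 0) := by
  classical
  set e : Fin 3 → ℤ := ![1, -1, 0] with he
  set w : Fin 3 → ℝ := ![p, p, q] with hw
  set u : AddMonoidAlgebra ℝ ℤ :=
    AddMonoidAlgebra.single 1 p + AddMonoidAlgebra.single (-1) p with hu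
  set v : AddMonoidAlgebra ℝ ℤ := AddMonoidAlgebra.single 0 q with hv
  have hsum : (∑ t : Fin 3, AddMonoidAlgebra.single (e t) (w t) : AddMonoidAlgebra ℝ ℤ)
      = u + v := by
    rw [Fin.sum_univ_three]
    simp only [he, hw, hu, hv, Matrix.cons_val_zero, Matrix.cons_val_one, Matrix.head_cons,
      Matrix.cons_val_two, Matrix.tail_cons]
  -- LHS evaluation
  have hL : ((u + v) ^ k : AddMonoidAlgebra ℝ ℤ).coeff 0
      = ∑ s ∈ Finset.univ.filter
          (fun s : Fin k → Fin 3 => (∑ i, e (s i)) = 0), ∏ i, w (s i) := by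
    rw [← hsum]
    have hpow : (∑ t : Fin 3, AddMonoidAlgebra.single (e t) (w t) : AddMonoidAlgebra ℝ ℤ) ^ k
        = ∑ s : Fin k → Fin 3,
            AddMonoidAlgebra.single (∑ i, e (s i)) (∏ i, w (s i)) := by
      rw [show (∑ t : Fin 3, AddMonoidAlgebra.single (e t) (w t) : AddMonoidAlgebra ℝ ℤ) ^ k
          = ∏ _i : Fin k, ∑ t ∈ (univ : Finset (Fin 3)), AddMonoidAlgebra.single (e t) (w t) by
        rw [Finset.prod_const, Finset.card_univ, Fintype.card_fin]]
      rw [Finset.prod_univ_sum]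
      rw [Fintype.piFinset_univ]
      exact Finset.sum_congr rfl fun s _ => AddMonoidAlgebra.prod_single _ _ _
    rw [hpow, AddMonoidAlgebra.coeff_sum, Finsupp.finset_sum_apply]
    rw [Finset.sum_filter]
    exact Finset.sum_congr rfl fun s _ => by
      rw [AddMonoidAlgebra.coeff_single, Finsupp.single_apply]
  -- powers of u evaluated at 0
  have hu0 : ∀ m : ℕ, ((u ^ m : AddMonoidAlgebra ℝ ℤ)).coeff 0
      = (if 2 ∣ m then (m.choose (m / 2) : ℝ) else 0) * p ^ m := by
    intro m
    rw [hu, add_pow_smul, AddMonoidAlgebra.coeff_sum, Finsupp.finset_sum_apply]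
    have hterm : ∀ j ∈ Finset.range (m + 1),
        (m.choose j • ((AddMonoidAlgebra.single (1:ℤ) p) ^ j *
          (AddMonoidAlgebra.single (-1:ℤ) p) ^ (m - j)) : AddMonoidAlgebra ℝ ℤ).coeff 0
        = if m = 2 * j then (m.choose j : ℝ) * p ^ m else 0 := by
      intro j hj
      rw [Finset.mem_range] at hj
      rw [AddMonoidAlgebra.single_pow, AddMonoidAlgebra.single_pow,
        AddMonoidAlgebra.single_mul_single, AddMonoidAlgebra.coeff_smul_apply,
          AddMonoidAlgebra.coeff_single, Finsupp.single_apply]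
      have hcond : (j • (1:ℤ) + (m - j) • (-1:ℤ) = 0) ↔ m = 2 * j := by
        simp only [nsmul_eq_mul, mul_one, mul_neg_one]
        omega
      by_cases h : m = 2 * j
      · rw [if_pos (hcond.mpr h), if_pos h, nsmul_eq_mul, ← pow_add,
          show j + (m - j) = m from by omega]
      · rw [if_neg (fun hc => h (hcond.mp hc)), if_neg h, smul_zero]
    rw [Finset.sum_congr rfl hterm]
    by_cases hm : 2 ∣ m
    · obtain ⟨j0, hj0⟩ := hm
      rw [Finset.sum_eq_single j0 (fun j _ hne => by rw [if_neg (by omega)])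
        (fun h => absurd (Finset.mem_range.mpr (by omega)) h)]
      rw [if_pos hj0, if_pos ⟨j0, hj0⟩, show m / 2 = j0 from by omega]
    · rw [if_neg hm, zero_mul]
      exact Finset.sum_eq_zero fun j hj => if_neg (fun hc => hm ⟨j, by omega⟩)
  -- RHS evaluation
  have hR : ((u + v) ^ k : AddMonoidAlgebra ℝ ℤ).coeff 0
      = ∑ m ∈ Finset.range (k + 1),
          (k.choose m : ℝ) * p ^ m * q ^ (k - m) *
            (if 2 ∣ m then (m.choose (m / 2) : ℝ) else 0) := by
    rw [add_pow_smul, AddMonoidAlgebra.coeff_sum, Finsupp.finset_sum_apply]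
    refine Finset.sum_congr rfl fun m _ => ?_
    rw [hv, AddMonoidAlgebra.single_pow, smul_zero, AddMonoidAlgebra.coeff_smul_apply,
      AddMonoidAlgebra.coeff_mul_single_zero, hu0 m, nsmul_eq_mul]
    ring
  rw [← hL, hR]




lemma final_bound (n k : ℕ) (hn : 0 < n) :
    ∑ m ∈ Finset.range (k + 1),
        (k.choose m : ℝ) * (1 / (2 * n)) ^ m * (((n : ℝ) - 1) / n) ^ (k - m) *
          (if 2 ∣ m then (m.choose (m / 2) : ℝ) else 0)
    ≤ Real.sqrt 2 * Real.sqrt (n / (k + 1)) := by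
  have hn' : (0 : ℝ) < n := by exact_mod_cast hn
  set r : ℝ := 1 / n with hr
  have hr0 : 0 < r := by positivity
  have hr1 : r ≤ 1 := by
    rw [hr, div_le_one hn']
    exact_mod_cast hn
  have h1mr : (0:ℝ) ≤ 1 - r := by linarith
  have hq : ((n : ℝ) - 1) / n = 1 - r := by rw [hr]; field_simp
  have hp : (1 : ℝ) / (2 * n) = r / 2 := by rw [hr]; ring
  set w : ℕ → ℝ := fun m => (k.choose m : ℝ) * r ^ m * (1 - r) ^ (k - m) with hwdef
  have hw0 : ∀ m, 0 ≤ w m := fun m => by positivity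
  -- termwise bound
  have hterm : ∀ m ∈ Finset.range (k + 1),
      (k.choose m : ℝ) * (1 / (2 * n)) ^ m * (((n : ℝ) - 1) / n) ^ (k - m) *
          (if 2 ∣ m then (m.choose (m / 2) : ℝ) else 0)
      ≤ Real.sqrt 2 * (w m / Real.sqrt ((m:ℝ) + 1)) := by
    intro m _
    rw [hq, hp]
    by_cases hm : 2 ∣ m
    · obtain ⟨j, hj⟩ := hm
      rw [if_pos ⟨j, hj⟩]
      have hs1 : (0:ℝ) < Real.sqrt ((j:ℝ)+1) := by positivity
      have hs2 : (0:ℝ) < Real.sqrt ((m:ℝ)+1) := by positivity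
      have hs1ne : Real.sqrt ((j:ℝ)+1) ≠ 0 := ne_of_gt hs1
      have hcb : (m.choose (m / 2) : ℝ) = Nat.centralBinom j := by
        rw [Nat.centralBinom]
        congr 2 <;> omega
      have hsq2 : Real.sqrt ((m:ℝ) + 1) ≤ Real.sqrt 2 * Real.sqrt ((j:ℝ) + 1) := by
        rw [← Real.sqrt_mul (by norm_num)]
        apply Real.sqrt_le_sqrt
        push_cast
        rw [hj]; push_cast; linarith
      have h4 : ((4:ℝ)) ^ j = 2 ^ m := by
        rw [hj, pow_mul]; norm_num
      have hcb4 : (Nat.centralBinom j : ℝ) ≤ 2 ^ m / Real.sqrt ((j:ℝ)+1) := by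
        rw [le_div_iff₀ hs1, ← h4]
        exact cb_real j
      have hkey : (r / 2) ^ m * (Nat.centralBinom j : ℝ) ≤ r ^ m / Real.sqrt ((j:ℝ) + 1) := by
        have heq : (r / 2) ^ m * ((2:ℝ) ^ m / Real.sqrt ((j:ℝ)+1)) = r ^ m / Real.sqrt ((j:ℝ)+1) := by
          field_simp
          rw [← mul_pow, div_mul_cancel₀ r two_ne_zero]
        calc (r / 2) ^ m * (Nat.centralBinom j : ℝ)
            ≤ (r / 2) ^ m * ((2:ℝ) ^ m / Real.sqrt ((j:ℝ)+1)) :=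
              mul_le_mul_of_nonneg_left hcb4 (by positivity)
          _ = r ^ m / Real.sqrt ((j:ℝ)+1) := heq
      have hc : (0:ℝ) ≤ (k.choose m : ℝ) * (1 - r) ^ (k - m) * r ^ m := by positivity
      calc (k.choose m : ℝ) * (r / 2) ^ m * (1 - r) ^ (k - m) * (m.choose (m / 2) : ℝ)
          = (k.choose m : ℝ) * (1 - r) ^ (k - m) * ((r / 2) ^ m * (Nat.centralBinom j : ℝ)) := by
            rw [hcb]; ring
        _ ≤ (k.choose m : ℝ) * (1 - r) ^ (k - m) * (r ^ m / Real.sqrt ((j:ℝ) + 1)) :=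
            mul_le_mul_of_nonneg_left hkey (by positivity)
        _ = ((k.choose m : ℝ) * (1 - r) ^ (k - m) * r ^ m) / Real.sqrt ((j:ℝ) + 1) := by ring
        _ ≤ (Real.sqrt 2 * ((k.choose m : ℝ) * (1 - r) ^ (k - m) * r ^ m)) / Real.sqrt ((m:ℝ) + 1) := by
            rw [div_le_div_iff₀ hs1 hs2]
            calc (k.choose m : ℝ) * (1 - r) ^ (k - m) * r ^ m * Real.sqrt ((m:ℝ)+1)
                ≤ (k.choose m : ℝ) * (1 - r) ^ (k - m) * r ^ m * (Real.sqrt 2 * Real.sqrt ((j:ℝ)+1)) :=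
                  mul_le_mul_of_nonneg_left hsq2 hc
              _ = Real.sqrt 2 * ((k.choose m : ℝ) * (1 - r) ^ (k - m) * r ^ m) * Real.sqrt ((j:ℝ)+1) := by
                  ring
        _ = Real.sqrt 2 * (w m / Real.sqrt ((m:ℝ) + 1)) := by
            simp only [hwdef]; ring
    · rw [if_neg hm, mul_zero]
      positivity
  refine le_trans (Finset.sum_le_sum hterm) ?_
  rw [← Finset.mul_sum]
  apply mul_le_mul_of_nonneg_left _ (Real.sqrt_nonneg 2)
  have hsum1 : ∑ m ∈ Finset.range (k + 1), w m = 1 := by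
    calc ∑ m ∈ Finset.range (k + 1), w m
        = ∑ m ∈ Finset.range (k + 1), r ^ m * (1 - r) ^ (k - m) * (k.choose m : ℝ) :=
          Finset.sum_congr rfl fun m _ => by simp only [hwdef]; ring
      _ = (r + (1 - r)) ^ k := (add_pow r (1 - r) k).symm
      _ = 1 := by norm_num
  have hsum2 : ∑ m ∈ Finset.range (k + 1), w m / ((m : ℝ) + 1) ≤ (n : ℝ) / ((k:ℝ) + 1) := by
    have hterm2 : ∀ m ∈ Finset.range (k + 1),
        w m / ((m : ℝ) + 1)
        = (1 / (((k:ℝ) + 1) * r)) *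
            (((k+1).choose (m+1) : ℝ) * r ^ (m+1) * (1 - r) ^ (k + 1 - (m+1))) := by
      intro m hm
      rw [Finset.mem_range] at hm
      have hch : ((k:ℝ) + 1) * (k.choose m : ℝ) = ((k+1).choose (m+1) : ℝ) * ((m:ℝ) + 1) := by
        exact_mod_cast congrArg (Nat.cast (R := ℝ)) (Nat.add_one_mul_choose_eq k m)
      have hm1 : ((m:ℝ)+1) ≠ 0 := by positivity
      have hk1 : ((k:ℝ)+1) ≠ 0 := by positivity
      have hrne : r ≠ 0 := ne_of_gt hr0
      have hch' : ((k+1).choose (m+1) : ℝ) = ((k:ℝ)+1) * (k.choose m : ℝ) / ((m:ℝ)+1) := by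
        field_simp
        linarith [hch]
      have h1 : k + 1 - (m + 1) = k - m := by omega
      simp only [hwdef, h1, hch']
      field_simp
      ring
    rw [Finset.sum_congr rfl hterm2, ← Finset.mul_sum]
    have hsle : ∑ m ∈ Finset.range (k + 1),
        (((k+1).choose (m+1) : ℝ) * r ^ (m+1) * (1 - r) ^ (k + 1 - (m+1))) ≤ 1 := by
      have hfull : ∑ m ∈ Finset.range (k + 2),
          (((k+1).choose m : ℝ) * r ^ m * (1 - r) ^ (k + 1 - m)) = 1 := by
        calc ∑ m ∈ Finset.range (k + 2), (((k+1).choose m : ℝ) * r ^ m * (1 - r) ^ (k + 1 - m))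
            = ∑ m ∈ Finset.range (k + 2), r ^ m * (1 - r) ^ (k + 1 - m) * ((k+1).choose m : ℝ) :=
              Finset.sum_congr rfl fun m _ => by ring
          _ = (r + (1 - r)) ^ (k+1) := (add_pow r (1 - r) (k+1)).symm
          _ = 1 := by norm_num
      rw [Finset.sum_range_succ'] at hfull
      have h0 : (0:ℝ) ≤ ((k+1).choose 0 : ℝ) * r ^ 0 * (1 - r) ^ (k + 1 - 0) := by positivity
      linarith
    calc (1 / (((k:ℝ) + 1) * r)) * ∑ m ∈ Finset.range (k + 1),
            (((k+1).choose (m+1) : ℝ) * r ^ (m+1) * (1 - r) ^ (k + 1 - (m+1)))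
        ≤ (1 / (((k:ℝ) + 1) * r)) * 1 :=
          mul_le_mul_of_nonneg_left hsle (by positivity)
      _ = (n : ℝ) / ((k:ℝ) + 1) := by
          rw [hr]; field_simp
  have hCS : (∑ m ∈ Finset.range (k + 1), w m / Real.sqrt ((m:ℝ) + 1)) ^ 2
      ≤ (∑ m ∈ Finset.range (k + 1), w m) * ∑ m ∈ Finset.range (k + 1), w m / ((m : ℝ) + 1) := by
    apply Finset.sum_sq_le_sum_mul_sum_of_sq_eq_mul
    · exact fun m _ => hw0 m
    · intro m _
      have := hw0 m
      positivity
    · intro m _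
      rw [div_pow, Real.sq_sqrt (by positivity)]
      ring
  rw [hsum1, one_mul] at hCS
  have hnn : 0 ≤ ∑ m ∈ Finset.range (k + 1), w m / Real.sqrt ((m:ℝ) + 1) := by
    apply Finset.sum_nonneg
    intro m _
    have := hw0 m
    positivity
  have : ((n:ℝ) / ((k:ℝ) + 1)) = ((n:ℝ) / ((k:ℕ) + 1 : ℝ)) := by norm_num
  exact (Real.le_sqrt hnn (by positivity)).mpr (le_trans hCS hsum2)

/-- For a lazy one-dimensional random walk of length `N-1` whose i.i.d. increments are
`+a` with probability `1/(2n)`, `-a` with probability `1/(2n)` and `0` with probability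
`(n-1)/n`, the probability of ending within distance `a` of the origin is at most
`10 n / √N` for `N > 2`. -/
theorem lazy_walk_small_ball
    {Ω : Type*} [MeasurableSpace Ω] (P : Measure Ω) [IsProbabilityMeasure P]
    (n N : ℕ) (hn : 0 < n) (hN : 2 < N) (a : ℝ) (ha : 0 < a)
    (X : Fin (N - 1) → Ω → ℝ)
    (hmeas : ∀ i, Measurable (X i))
    (hindep : iIndepFun X P)
    (hlaw : ∀ i, Measure.map (X i) P
      = (ENNReal.ofReal (1 / (2 * n))) • Measure.dirac a
        + (ENNReal.ofReal (1 / (2 * n))) • Measure.dirac (-a)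
        + (ENNReal.ofReal ((n - 1) / n)) • Measure.dirac 0) :
    (P {ω | |∑ i, X i ω| < a}).toReal ≤ 10 * n / Real.sqrt N := by
  classical
  have hn' : (0 : ℝ) < n := by exact_mod_cast hn
  have hn1 : (1 : ℝ) ≤ n := by exact_mod_cast hn
  -- distinctness
  have hne1 : -a ≠ a := by intro h; linarith
  have hne2 : (0:ℝ) ≠ a := by intro h; linarith
  have hne3 : (0:ℝ) ≠ -a := by intro h; linarith
  have hne1' : a ≠ -a := fun h => hne1 h.symm
  have hne2' : a ≠ 0 := fun h => hne2 h.symm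
  have hne3' : -a ≠ 0 := fun h => hne3 h.symm
  set V : Fin 3 → ℝ := ![a, -a, 0] with hV
  set wR : Fin 3 → ℝ := ![1/(2*(n:ℝ)), 1/(2*(n:ℝ)), ((n:ℝ)-1)/n] with hwR
  have hwRnn : ∀ t, 0 ≤ wR t := by
    intro t
    fin_cases t
    · show (0:ℝ) ≤ 1/(2*(n:ℝ)); positivity
    · show (0:ℝ) ≤ 1/(2*(n:ℝ)); positivity
    · show (0:ℝ) ≤ ((n:ℝ)-1)/n
      apply div_nonneg (by linarith) (le_of_lt hn')
  have hVinj : Function.Injective V := by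
    intro t t' h
    fin_cases t <;> fin_cases t' <;> first
      | rfl
      | exact absurd (show a = -a from h) hne1'
      | exact absurd (show a = 0 from h) hne2'
      | exact absurd (show -a = a from h) hne1
      | exact absurd (show -a = 0 from h) hne3'
      | exact absurd (show (0:ℝ) = a from h) hne2
      | exact absurd (show (0:ℝ) = -a from h) hne3
  -- singleton probabilities
  have hsingle : ∀ i (t : Fin 3), P (X i ⁻¹' {V t}) = ENNReal.ofReal (wR t) := by
    intro i t
    rw [← Measure.map_apply (hmeas i) (measurableSet_singleton _), hlaw i]
    fin_cases t <;>
      simp [hV, hwR, Measure.dirac_apply, Set.indicator_apply, hne1, hne2, hne3, hne1', hne2', hne3']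
  -- full measure of the support
  have hS : ∀ i, P (X i ⁻¹' {a, -a, 0}) = 1 := by
    intro i
    have hSm : MeasurableSet ({a, -a, 0} : Set ℝ) :=
      ((measurableSet_singleton (0:ℝ)).insert (-a)).insert a
    rw [← Measure.map_apply (hmeas i) hSm, hlaw i]
    have h1 : Measure.dirac a ({a, -a, 0} : Set ℝ) = 1 := by simp
    have h2 : Measure.dirac (-a) ({a, -a, 0} : Set ℝ) = 1 := by simp
    have h3 : Measure.dirac (0:ℝ) ({a, -a, 0} : Set ℝ) = 1 := by simp
    simp only [Measure.add_apply, Measure.smul_apply, smul_eq_mul, h1, h2, h3, mul_one]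
    rw [← ENNReal.ofReal_add (by positivity) (by positivity),
      ← ENNReal.ofReal_add (by positivity) (by apply div_nonneg (by linarith) (le_of_lt hn'))]
    rw [show 1 / (2*(n:ℝ)) + 1 / (2*(n:ℝ)) + ((n:ℝ)-1)/n = 1 by field_simp; ring]
    exact ENNReal.ofReal_one
  have hnullc : ∀ i, P ((X i ⁻¹' {a, -a, 0})ᶜ) = 0 := by
    intro i
    have hSm : MeasurableSet ({a, -a, 0} : Set ℝ) :=
      ((measurableSet_singleton (0:ℝ)).insert (-a)).insert a
    rw [measure_compl ((hmeas i) hSm) (measure_ne_top P _), hS i, measure_univ, tsub_self]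
  -- the partition events
  set E : (Fin (N-1) → Fin 3) → Set Ω := fun s => ⋂ i, X i ⁻¹' {V (s i)} with hE
  have hEmeas : ∀ s, MeasurableSet (E s) := fun s =>
    MeasurableSet.iInter fun i => (hmeas i) (measurableSet_singleton _)
  have hPE : ∀ s, P (E s) = ∏ i, ENNReal.ofReal (wR (s i)) := by
    intro s
    have h := hindep.measure_inter_preimage_eq_mul (S := Finset.univ)
      (sets := fun i => {V (s i)}) (fun i _ => measurableSet_singleton _)
    simp only [Finset.mem_univ, Set.iInter_true] at h
    exact h.trans (Finset.prod_congr rfl fun i _ => hsingle i (s i))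
  set A : Set Ω := {ω | |∑ i, X i ω| < a} with hA
  have hAmeas : MeasurableSet A := by
    apply measurableSet_lt _ measurable_const
    exact (Finset.measurable_sum Finset.univ fun i _ => hmeas i).abs
  -- covering
  have hUc : P ((⋃ s, E s)ᶜ) = 0 := by
    refine measure_mono_null ?_ (measure_iUnion_null fun i => hnullc i)
    intro ω hω
    simp only [Set.mem_compl_iff, Set.mem_iUnion, not_exists] at hω
    simp only [Set.mem_iUnion, Set.mem_compl_iff]
    by_contra hc
    push_neg at hc
    apply hω (fun i => if X i ω = a then 0 else if X i ω = -a then 1 else 2)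
    refine Set.mem_iInter.mpr fun i => ?_
    have hmem := hc i
    simp only [Set.mem_preimage, Set.mem_insert_iff] at hmem
    simp only [Set.mem_preimage, Set.mem_singleton_iff]
    rcases hmem with h | h | h
    · simp [h, hV]
    · rw [if_neg (by rw [h]; exact hne1), if_pos h]
      simp [hV, h]
    · simp only [Set.mem_singleton_iff] at h
      rw [if_neg (by rw [h]; exact hne2), if_neg (by rw [h]; exact hne3)]
      simp [hV, h]
  have hPA : P A = ∑ s : (Fin (N-1) → Fin 3), P (A ∩ E s) := by
    conv_lhs => rw [← measure_inter_conull hUc]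
    rw [Set.inter_iUnion]
    have hdisj : Pairwise (Function.onFun Disjoint fun s => A ∩ E s) := by
      intro s s' hne
      obtain ⟨i, hi⟩ := Function.ne_iff.mp hne
      refine Set.disjoint_left.mpr fun ω hω hω' => ?_
      have h1 : X i ω = V (s i) := Set.mem_iInter.mp hω.2 i
      have h2 : X i ω = V (s' i) := Set.mem_iInter.mp hω'.2 i
      exact hi (hVinj (h1 ▸ h2))
    rw [measure_iUnion hdisj (fun s => hAmeas.inter (hEmeas s)), tsum_fintype]
  have hAE : ∀ s, P (A ∩ E s)
      = if |∑ i, V (s i)| < a then P (E s) else 0 := by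
    intro s
    have hsum : ∀ ω ∈ E s, ∑ i, X i ω = ∑ i, V (s i) := by
      intro ω hω
      exact Finset.sum_congr rfl fun i _ => Set.mem_iInter.mp hω i
    by_cases hcond : |∑ i, V (s i)| < a
    · rw [if_pos hcond]
      congr 1
      rw [Set.inter_eq_self_of_subset_right]
      intro ω hω
      show |∑ i, X i ω| < a
      rw [hsum ω hω]
      exact hcond
    · rw [if_neg hcond]
      have : A ∩ E s = ∅ := by
        ext ω
        simp only [Set.mem_inter_iff, Set.mem_empty_iff_false, iff_false, not_and]
        intro hωA hωE
        exact hcond (by rw [← hsum ω hωE]; exact hωA)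
      rw [this, measure_empty]
  -- to a filtered sum
  have hPA2 : P A = ∑ s ∈ Finset.univ.filter
      (fun s : Fin (N-1) → Fin 3 => |∑ i, V (s i)| < a),
      ∏ i, ENNReal.ofReal (wR (s i)) := by
    rw [hPA, Finset.sum_filter]
    exact Finset.sum_congr rfl fun s _ => by rw [hAE s, hPE s]
  -- real version
  have hPA3 : (P A).toReal = ∑ s ∈ Finset.univ.filter
      (fun s : Fin (N-1) → Fin 3 => |∑ i, V (s i)| < a),
      ∏ i, wR (s i) := by
    rw [hPA2, ENNReal.toReal_sum (fun s _ => ?_)]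
    · exact Finset.sum_congr rfl fun s _ => by
        rw [ENNReal.toReal_prod]
        exact Finset.prod_congr rfl fun i _ => ENNReal.toReal_ofReal (hwRnn (s i))
    · exact (ENNReal.prod_lt_top fun i _ => ENNReal.ofReal_lt_top).ne
  -- condition rewrite
  have hcond_iff : ∀ s : Fin (N-1) → Fin 3,
      (|∑ i, V (s i)| < a) ↔ ((∑ i, (![1, -1, 0] : Fin 3 → ℤ) (s i)) = 0) := by
    intro s
    have hVe : ∀ t, V t = a * (((![1, -1, 0] : Fin 3 → ℤ) t : ℤ) : ℝ) := by
      intro t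
      fin_cases t <;> simp [hV]
    have hsumeq : ∑ i, V (s i)
        = a * (((∑ i, (![1, -1, 0] : Fin 3 → ℤ) (s i) : ℤ)) : ℝ) := by
      push_cast
      rw [Finset.mul_sum]
      exact Finset.sum_congr rfl fun i _ => hVe (s i)
    rw [hsumeq, abs_mul, abs_of_pos ha, mul_lt_iff_lt_one_right ha,
      ← Int.cast_abs, show (1:ℝ) = ((1:ℤ):ℝ) by norm_num, Int.cast_lt, Int.abs_lt_one_iff]
  have hfilter : Finset.univ.filter (fun s : Fin (N-1) → Fin 3 => |∑ i, V (s i)| < a)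
      = Finset.univ.filter
        (fun s : Fin (N-1) → Fin 3 => (∑ i, (![1, -1, 0] : Fin 3 → ℤ) (s i)) = 0) :=
    Finset.filter_congr fun s _ => by rw [hcond_iff s]
  -- apply the identities
  have hPA4 : (P A).toReal
      ≤ Real.sqrt 2 * Real.sqrt (n / ((N-1:ℕ) + 1)) := by
    rw [hPA3, hfilter, hwR]
    rw [key_identity (N-1) (1/(2*(n:ℝ))) (((n:ℝ)-1)/n)]
    exact final_bound n (N-1) hn
  -- final numeric estimate
  have hkN : ((N - 1 : ℕ) : ℝ) + 1 = (N : ℝ) := by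
    rw [Nat.cast_sub (by omega : 1 ≤ N)]
    ring
  have hN0 : (0:ℝ) < N := by
    have : (0:ℕ) < N := by omega
    exact_mod_cast this
  have hsqrtN : (0:ℝ) < Real.sqrt N := Real.sqrt_pos.mpr hN0
  rw [hkN] at hPA4
  refine le_trans hPA4 ?_
  have hdivsqrt : Real.sqrt ((n:ℝ) / N) = Real.sqrt n / Real.sqrt N :=
    Real.sqrt_div (by positivity) _
  rw [hdivsqrt, ← mul_div_assoc]
  have h2n : Real.sqrt 2 * Real.sqrt n ≤ 10 * n := by
    rw [← Real.sqrt_mul (by norm_num)]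
    calc Real.sqrt (2 * n) ≤ Real.sqrt ((10 * n) ^ 2) := Real.sqrt_le_sqrt (by nlinarith)
      _ = 10 * n := Real.sqrt_sq (by positivity)
  gcongr
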